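/- If J is a uniform normal ideal on a regular uncountable cardinal κ, then for each n ∈ ω the Fubini power J^n is normal in the following sense: for any family ⟨D_a : a ∈ [κ]^{<ω}⟩ of sets in the dual filter (J^n)^*, the diagonal intersection D = {b ∈ [κ]^n : for all finite a ⊆ min b, b ∈ D_a} belongs to (J^n)^*. -/

import Mathlib

open Cardinal

/-- `J` is an ideal of subsets of `α`. -/
def IsIdeal {α : Type} (J : Set (Set α)) : Prop :=
  ∅ ∈ J ∧ (∀ A B : Set α, A ∈ J → B ⊆ A → B ∈ J) ∧
    (∀ A B : Set α, A ∈ J → B ∈ J → A ∪ B ∈ J)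

/-- `J` is proper: the whole space is not in `J`. -/
def ProperIdeal {α : Type} (J : Set (Set α)) : Prop := Set.univ ∉ J

/-- `J` is uniform: every set of cardinality `< |α|` is in `J`. -/
def UniformIdeal {α : Type} (J : Set (Set α)) : Prop := ∀ A : Set α, #A < #α → A ∈ J

/-- `J` is normal: closed under diagonal unions. -/
def NormalIdeal {α : Type} [LT α] (J : Set (Set α)) : Prop :=
  ∀ A : α → Set α, (∀ i, A i ∈ J) → {β : α | ∃ i < β, β ∈ A i} ∈ J

/-- The section of `X ⊆ [κ]^{n+1}` at the first coordinate `γ`. -/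
def seca {α : Type} (γ : α) {n : ℕ} (X : Set (Fin (n + 1) → α)) : Set (Fin n → α) :=
  {b | Fin.cons γ b ∈ X}

/-- The `n`-th Fubini power `J^n` of an ideal `J` on `α`, as an ideal on `α^n`:
`X ∈ J^{n+1}` iff the set of `γ` whose section lies in `J^n` is in the dual filter `J^*`. -/
def Fub {α : Type} (J : Set (Set α)) : (n : ℕ) → Set (Set (Fin n → α))
  | 0 => {X | X = ∅}
  | n + 1 => {X | {γ : α | seca γ X ∈ Fub J n}ᶜ ∈ J}

section Aux

variable {α : Type} [LinearOrder α]

lemma mem_fub_succ {J : Set (Set α)} {n : ℕ} {X : Set (Fin (n + 1) → α)} :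
    X ∈ Fub J (n + 1) ↔ {γ : α | seca γ X ∈ Fub J n}ᶜ ∈ J := by
  rw [Fub]; rfl

lemma mem_fub_zero {J : Set (Set α)} {X : Set (Fin 0 → α)} :
    X ∈ Fub J 0 ↔ X = ∅ := by
  rw [Fub]; rfl

lemma seca_union (γ : α) {n : ℕ} (X Y : Set (Fin (n + 1) → α)) :
    seca γ (X ∪ Y) = seca γ X ∪ seca γ Y := rfl

lemma fub_props {J : Set (Set α)} (hJ : IsIdeal J) (hp : ProperIdeal J) : ∀ n : ℕ,
    (∅ ∈ Fub J n) ∧ (∀ A B : Set (Fin n → α), A ∈ Fub J n → B ⊆ A → B ∈ Fub J n) ∧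
    (∀ A B : Set (Fin n → α), A ∈ Fub J n → B ∈ Fub J n → A ∪ B ∈ Fub J n) ∧
    (Set.univ ∉ Fub J n) := by
  intro n
  induction n with
  | zero =>
    refine ⟨mem_fub_zero.mpr rfl, ?_, ?_, ?_⟩
    · intro A B hA hBA
      rw [mem_fub_zero] at *
      exact Set.subset_empty_iff.mp (hA ▸ hBA)
    · intro A B hA hB
      rw [mem_fub_zero] at *
      rw [hA, hB, Set.empty_union]
    · rw [mem_fub_zero]
      have : Nonempty (Fin 0 → α) := ⟨Fin.elim0⟩
      exact Set.nonempty_iff_ne_empty.mp Set.univ_nonempty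
  | succ n ih =>
    refine ⟨?_, ?_, ?_, ?_⟩
    · rw [mem_fub_succ]
      have : {γ : α | seca γ (∅ : Set (Fin (n + 1) → α)) ∈ Fub J n} = Set.univ := by
        ext γ
        simp only [Set.mem_setOf_eq, Set.mem_univ, iff_true]
        have : seca γ (∅ : Set (Fin (n + 1) → α)) = ∅ := rfl
        rw [this]; exact ih.1
      rw [this, Set.compl_univ]; exact hJ.1
    · intro A B hA hBA
      rw [mem_fub_succ] at *
      refine hJ.2.1 _ _ hA ?_
      intro γ hγ
      simp only [Set.mem_compl_iff, Set.mem_setOf_eq] at *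
      exact fun h => hγ (ih.2.1 _ _ h (fun b hb => hBA hb))
    · intro A B hA hB
      rw [mem_fub_succ] at *
      refine hJ.2.1 _ _ (hJ.2.2 _ _ hA hB) ?_
      intro γ hγ
      simp only [Set.mem_compl_iff, Set.mem_setOf_eq, Set.mem_union] at *
      by_contra h
      push_neg at h
      exact hγ (seca_union γ A B ▸ ih.2.2.1 _ _ h.1 h.2)
    · rw [mem_fub_succ]
      have : {γ : α | seca γ (Set.univ : Set (Fin (n + 1) → α)) ∈ Fub J n} = ∅ := by
        ext γ
        simp only [Set.mem_setOf_eq, Set.mem_empty_iff_false, iff_false]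
        have : seca γ (Set.univ : Set (Fin (n + 1) → α)) = Set.univ := rfl
        rw [this]; exact ih.2.2.2
      rw [this, Set.compl_empty]
      exact hp

/-- Bad initial segments form a set in `J`. -/
lemma iic_bad_small (hwo : IsWellOrder α (· < ·)) (hunc : ℵ₀ < #α)
    {J : Set (Set α)} (hJ : IsIdeal J) (hu : UniformIdeal J) (hn : NormalIdeal J) :
    {γ : α | Set.Iic γ ∉ J} ∈ J := by
  set T := {γ : α | Set.Iic γ ∉ J} with hT
  by_cases hTe : T = ∅
  · rw [hTe]; exact hJ.1
  have hTe' : T.Nonempty := Set.nonempty_iff_ne_empty.mpr hTe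
  set t := hwo.wf.min T hTe' with ht
  have htT : t ∈ T := hwo.wf.min_mem T hTe'
  have hIic : ¬ #(Set.Iic t) < #α := fun h => htT (hu _ h)
  have hIio : ¬ #(Set.Iio t) < #α := by
    intro h
    apply hIic
    calc #(Set.Iic t) = #(Set.Iio t ∪ {t} : Set α) := by rw [Set.Iio_union_right]
    _ ≤ #(Set.Iio t) + #({t} : Set α) := Cardinal.mk_union_le _ _
    _ < #α := by
        rw [Cardinal.mk_singleton]
        exact Cardinal.add_lt_of_lt hunc.le h (one_lt_aleph0.trans hunc)
  have hle : #(Set.Ici t) ≤ #(Set.Iio t) :=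
    le_trans (Cardinal.mk_set_le _) (not_lt.mp hIio)
  obtain ⟨e⟩ := (Cardinal.le_def _ _).mp hle
  set A : α → Set α := fun i => {β | ∃ hb : β ∈ Set.Ici t, (e ⟨β, hb⟩ : α) = i} with hA
  have hAJ : ∀ i, A i ∈ J := by
    intro i
    apply hu
    have hsub : (A i).Subsingleton := by
      intro β1 h1 β2 h2
      obtain ⟨hb1, he1⟩ := h1
      obtain ⟨hb2, he2⟩ := h2
      have : e ⟨β1, hb1⟩ = e ⟨β2, hb2⟩ := Subtype.ext (he1.trans he2.symm)
      exact congrArg Subtype.val (e.injective this)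
    exact lt_of_le_of_lt (Cardinal.mk_le_one_iff_set_subsingleton.mpr hsub)
      (one_lt_aleph0.trans hunc)
  refine hJ.2.1 _ _ (hn A hAJ) ?_
  intro γ hγ
  have htγ : t ≤ γ := by
    by_contra h
    exact hwo.wf.not_lt_min T hγ (not_le.mp h)
  refine ⟨(e ⟨γ, htγ⟩ : α), ?_, htγ, rfl⟩
  exact lt_of_lt_of_le (e ⟨γ, htγ⟩).2 htγ

/-- The set of points with finitely many predecessors. -/
lemma first_omega (hwo : IsWellOrder α (· < ·)) (hunc : ℵ₀ < #α) :
    Set.Countable {x : α | (Set.Iio x).Finite} ∧ {x : α | (Set.Iio x).Finite}.Infinite := by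
  set F := {x : α | (Set.Iio x).Finite} with hF
  have hcnt : F.Countable := by
    rw [Set.countable_coe_iff.symm]
    refine ⟨⟨fun x => x.2.toFinset.card, ?_⟩⟩
    intro a b hab
    by_contra hne
    have hne' : a.1 ≠ b.1 := fun h => hne (Subtype.ext h)
    rcases hne'.lt_or_gt with h | h
    · have : a.2.toFinset ⊂ b.2.toFinset := by
        rw [Set.Finite.toFinset_ssubset_toFinset]
        exact ⟨fun y hy => lt_trans hy h, fun hc => absurd (hc h) (lt_irrefl a.1)⟩
      exact absurd hab (Finset.card_lt_card this).ne
    · have : b.2.toFinset ⊂ a.2.toFinset := by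
        rw [Set.Finite.toFinset_ssubset_toFinset]
        exact ⟨fun y hy => lt_trans hy h, fun hc => absurd (hc h) (lt_irrefl b.1)⟩
      exact absurd hab.symm (Finset.card_lt_card this).ne
  refine ⟨hcnt, ?_⟩
  intro hfin
  have hinf : Infinite α := Cardinal.infinite_iff.mpr hunc.le
  have hFc : Fᶜ.Nonempty := by
    by_contra h
    have : F = Set.univ := by
      rw [← Set.compl_empty_iff]
      exact Set.not_nonempty_iff_eq_empty.mp h
    rw [this] at hfin
    exact Set.infinite_univ hfin
  set x := hwo.wf.min Fᶜ hFc with hx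
  have hsub : Set.Iio x ⊆ F := by
    intro y hy
    by_contra hyF
    exact hwo.wf.not_lt_min Fᶜ hyF hy
  have : x ∈ F := hfin.subset hsub
  exact hwo.wf.min_mem Fᶜ hFc this

/-- σ-completeness of a uniform normal ideal. -/
lemma sigma_complete (hwo : IsWellOrder α (· < ·)) (hunc : ℵ₀ < #α)
    {J : Set (Set α)} (hJ : IsIdeal J) (hu : UniformIdeal J) (hn : NormalIdeal J)
    (A : ℕ → Set α) (hA : ∀ n, A n ∈ J) : (⋃ n, A n) ∈ J := by
  obtain ⟨hcnt, hinf⟩ := first_omega hwo hunc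
  set F := {x : α | (Set.Iio x).Finite} with hF
  have hFJ : F ∈ J := by
    apply hu
    have : Countable ↥F := hcnt.to_subtype
    exact lt_of_le_of_lt Cardinal.mk_le_aleph0 hunc
  set c : ℕ ↪ F := hinf.natEmbedding with hc
  set A' : α → Set α := fun j => {β | ∃ m, ((c m : F) : α) = j ∧ β ∈ A m} with hA'
  have hA'J : ∀ j, A' j ∈ J := by
    intro j
    by_cases hj : ∃ m, ((c m : F) : α) = j
    · obtain ⟨m₀, hm₀⟩ := hj
      refine hJ.2.1 _ _ (hA m₀) ?_
      intro β hβ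
      obtain ⟨m, hm, hβm⟩ := hβ
      have : m = m₀ := c.injective (Subtype.ext (hm.trans hm₀.symm))
      exact this ▸ hβm
    · refine hJ.2.1 _ _ hJ.1 ?_
      intro β hβ
      obtain ⟨m, hm, _⟩ := hβ
      exact absurd ⟨m, hm⟩ hj
  refine hJ.2.1 _ _ (hJ.2.2 _ _ (hn A' hA'J) hFJ) ?_
  intro β hβ
  obtain ⟨m, hm⟩ := Set.mem_iUnion.mp hβ
  by_cases hlt : ((c m : F) : α) < β
  · exact Or.inl ⟨(c m : F), hlt, m, rfl, hm⟩
  · right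
    have hbc : β ≤ ((c m : F) : α) := not_lt.mp hlt
    have : Set.Iio β ⊆ Set.Iio ((c m : F) : α) := fun y hy => lt_of_lt_of_le hy hbc
    exact Set.Finite.subset (c m).2 this

/-- Diagonal union over finite sets. -/
lemma finDiag (hwo : IsWellOrder α (· < ·)) (hunc : ℵ₀ < #α)
    {J : Set (Set α)} (hJ : IsIdeal J) (hu : UniformIdeal J) (hn : NormalIdeal J)
    (B : Finset α → Set α) (hB : ∀ a, B a ∈ J) :
    {β : α | ∃ a : Finset α, (∀ x ∈ a, x < β) ∧ β ∈ B a} ∈ J := by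
  have key : ∀ n : ℕ, ∀ B : Finset α → Set α, (∀ a, B a ∈ J) →
      {β : α | ∃ a : Finset α, a.card = n ∧ (∀ x ∈ a, x < β) ∧ β ∈ B a} ∈ J := by
    intro n
    induction n with
    | zero =>
      intro B hB
      refine hJ.2.1 _ _ (hB ∅) ?_
      rintro β ⟨a, hc, _, hm⟩
      rwa [Finset.card_eq_zero.mp hc] at hm
    | succ n ih =>
      intro B hB
      have hV : ∀ i : α,
          {β : α | ∃ a : Finset α, a.card = n ∧ (∀ x ∈ a, x < β) ∧ β ∈ B (insert i a)} ∈ J :=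
        fun i => ih (fun a => B (insert i a)) (fun a => hB _)
      refine hJ.2.1 _ _ (hn _ hV) ?_
      rintro β ⟨a, hcard, hlt, hmem⟩
      have hne : a.Nonempty := Finset.card_pos.mp (by omega)
      refine ⟨a.min' hne, hlt _ (a.min'_mem hne), a.erase (a.min' hne), ?_, ?_, ?_⟩
      · rw [Finset.card_erase_of_mem (a.min'_mem hne), hcard]; omega
      · exact fun x hx => hlt x (Finset.mem_of_mem_erase hx)
      · rw [Finset.insert_erase (a.min'_mem hne)]; exact hmem
  have hsub : {β : α | ∃ a : Finset α, (∀ x ∈ a, x < β) ∧ β ∈ B a} ⊆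
      ⋃ n, {β : α | ∃ a : Finset α, a.card = n ∧ (∀ x ∈ a, x < β) ∧ β ∈ B a} := by
    rintro β ⟨a, h1, h2⟩
    exact Set.mem_iUnion.mpr ⟨a.card, a, rfl, h1, h2⟩
  exact hJ.2.1 _ _ (sigma_complete hwo hunc hJ hu hn _ (fun n => key n B hB)) hsub

lemma strictMono_cons {n : ℕ} {γ : α} {b : Fin (n + 1) → α}
    (hb : StrictMono b) (h : γ < b 0) : StrictMono (Fin.cons γ b) := by
  rw [Fin.strictMono_iff_lt_succ]
  intro i
  induction i using Fin.cases with
  | zero =>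
    simpa using h
  | succ j =>
    rw [← Fin.succ_castSucc]
    simp only [Fin.cons_succ]
    exact hb (Fin.castSucc_lt_succ (i := j))

lemma iic_fub {J : Set (Set α)} (hJ : IsIdeal J) (hp : ProperIdeal J)
    {n : ℕ} {γ : α} (h : Set.Iic γ ∈ J) :
    {b : Fin (n + 1) → α | b 0 ≤ γ} ∈ Fub J (n + 1) := by
  rw [mem_fub_succ]
  have hsec : ∀ δ : α, seca δ {b : Fin (n + 1) → α | b 0 ≤ γ} =
      (if δ ≤ γ then Set.univ else ∅) := by
    intro δ
    ext b
    simp only [seca, Set.mem_setOf_eq, Fin.cons_zero]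
    split <;> simp_all
  have : {δ : α | seca δ {b : Fin (n + 1) → α | b 0 ≤ γ} ∈ Fub J n}ᶜ = Set.Iic γ := by
    ext δ
    simp only [Set.mem_compl_iff, Set.mem_setOf_eq, hsec δ, Set.mem_Iic]
    by_cases hδ : δ ≤ γ
    · simp only [if_pos hδ, hδ, iff_true]
      exact (fub_props hJ hp n).2.2.2
    · simp only [if_neg hδ, hδ, iff_false, not_not]
      exact (fub_props hJ hp n).1
  rw [this]
  exact h

lemma aux_main (hwo : IsWellOrder α (· < ·)) (hunc : ℵ₀ < #α)
    {J : Set (Set α)} (hJ : IsIdeal J) (hp : ProperIdeal J) (hu : UniformIdeal J)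
    (hn : NormalIdeal J) :
    ∀ n : ℕ, ∀ D : Finset α → Set (Fin (n + 1) → α),
      (∀ a : Finset α, (D a)ᶜ ∈ Fub J (n + 1)) →
      {b : Fin (n + 1) → α | StrictMono b ∧
        ∀ a : Finset α, (∀ x ∈ a, x < b 0) → b ∈ D a}ᶜ ∈ Fub J (n + 1) := by
  intro n
  induction n with
  | zero =>
    intro D hD
    rw [mem_fub_succ]
    set B : Finset α → Set α := fun a => {γ | Fin.cons γ Fin.elim0 ∉ D a} with hB
    have hBJ : ∀ a, B a ∈ J := by
      intro a
      have := hD a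
      rw [mem_fub_succ] at this
      refine hJ.2.1 _ _ this ?_
      intro γ hγ
      simp only [Set.mem_compl_iff, Set.mem_setOf_eq, mem_fub_zero] at *
      intro hempty
      have : (Fin.elim0 : Fin 0 → α) ∈ seca γ (D a)ᶜ := hγ
      rw [hempty] at this
      exact this
    refine hJ.2.1 _ _ (finDiag hwo hunc hJ hu hn B hBJ) ?_
    intro γ hγ
    simp only [Set.mem_compl_iff, Set.mem_setOf_eq, mem_fub_zero] at hγ
    have hne : (seca γ {b : Fin 1 → α | StrictMono b ∧
        ∀ a : Finset α, (∀ x ∈ a, x < b 0) → b ∈ D a}ᶜ).Nonempty :=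
      Set.nonempty_iff_ne_empty.mpr hγ
    obtain ⟨b', hb'⟩ := hne
    have hb'e : b' = Fin.elim0 := funext fun x => x.elim0
    subst hb'e
    have hmono : StrictMono (Fin.cons γ (Fin.elim0 : Fin 0 → α)) := by
      have : Subsingleton (Fin (0 + 1)) := Fin.subsingleton_one
      exact Subsingleton.strictMono _
    simp only [seca, Set.mem_compl_iff, Set.mem_setOf_eq] at hb'
    push_neg at hb'
    obtain ⟨a, ha1, ha2⟩ := hb' hmono
    refine ⟨a, fun x hx => ?_, ha2⟩
    simpa using ha1 x hx
  | succ n ih =>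
    intro D hD
    rw [mem_fub_succ]
    set G : Finset α → Set α := fun a => {γ | seca γ (D a)ᶜ ∈ Fub J (n + 1)}ᶜ with hG
    have hGJ : ∀ a, G a ∈ J := fun a => mem_fub_succ.mp (hD a)
    have hH : {γ : α | ∃ a : Finset α, (∀ x ∈ a, x < γ) ∧ γ ∈ G a} ∈ J :=
      finDiag hwo hunc hJ hu hn G hGJ
    have hT : {γ : α | Set.Iic γ ∉ J} ∈ J := iic_bad_small hwo hunc hJ hu hn
    refine hJ.2.1 _ _ (hJ.2.2 _ _ hH hT) ?_
    intro γ hγ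
    simp only [Set.mem_compl_iff, Set.mem_setOf_eq] at hγ
    by_contra hcon
    rcases not_or.mp hcon with ⟨hcon1, hcon2⟩
    have hIic : Set.Iic γ ∈ J := not_not.mp hcon2
    have hnoa : ∀ a : Finset α, (∀ x ∈ a, x < γ) → seca γ (D a)ᶜ ∈ Fub J (n + 1) := by
      intro a ha
      by_contra h
      exact hcon1 ⟨a, ha, h⟩
    apply hγ
    classical
    set D' : Finset α → Set (Fin (n + 1) → α) := fun a =>
      if ∀ x ∈ a, x < γ then seca γ (D a) else Set.univ with hD'
    have hD'c : ∀ a, (D' a)ᶜ ∈ Fub J (n + 1) := by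
      intro a
      rw [hD']
      by_cases h : ∀ x ∈ a, x < γ
      · simp only [if_pos h]
        exact hnoa a h
      · simp only [if_neg h, Set.compl_univ]
        exact (fub_props hJ hp (n + 1)).1
    have hK := ih D' hD'c
    have hY : {b : Fin (n + 1) → α | b 0 ≤ γ} ∈ Fub J (n + 1) := iic_fub hJ hp hIic
    have hU := (fub_props hJ hp (n + 1)).2.2.1 _ _ hK hY
    refine (fub_props hJ hp (n + 1)).2.1 _ _ hU ?_
    intro b hb
    simp only [seca, Set.mem_setOf_eq, Set.mem_compl_iff] at hb
    by_contra hbn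
    rcases not_or.mp hbn with ⟨hb1, hb2⟩
    simp only [Set.mem_compl_iff, Set.mem_setOf_eq, not_not] at hb1
    obtain ⟨hbmono, hball⟩ := hb1
    simp only [Set.mem_setOf_eq] at hb2
    have hγb : γ < b 0 := not_le.mp hb2
    apply hb
    constructor
    · exact strictMono_cons hbmono hγb
    · intro a ha
      have haγ : ∀ x ∈ a, x < γ := by
        intro x hx
        have := ha x hx
        simpa using this
      have hbd : b ∈ D' a := hball a (fun x hx => lt_trans (haγ x hx) hγb)
      rw [hD'] at hbd
      simp only [if_pos haγ] at hbd
      exact hbd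

end Aux

/-- Normality of the Fubini power `J^n`: the diagonal intersection
`{b ∈ [κ]^n : ∀ finite a ⊆ min b, b ∈ D_a}` of sets `D_a` in the dual filter `(J^n)^*`
belongs to `(J^n)^*`. -/
theorem stmt5 (α : Type) [LinearOrder α] (hwo : IsWellOrder α (· < ·))
    (hreg : (#α).IsRegular) (hunc : ℵ₀ < #α)
    (J : Set (Set α)) (hJ : IsIdeal J) (hp : ProperIdeal J) (hu : UniformIdeal J)
    (hn : NormalIdeal J)
    (n : ℕ) (hpos : 0 < n) (D : Finset α → Set (Fin n → α))
    (hD : ∀ a : Finset α, (D a)ᶜ ∈ Fub J n) :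
    {b : Fin n → α | StrictMono b ∧
        ∀ a : Finset α, (∀ x ∈ a, x < b ⟨0, hpos⟩) → b ∈ D a}ᶜ ∈ Fub J n := by
  cases n with
  | zero => omega
  | succ m =>
    have h0 : (⟨0, hpos⟩ : Fin (m + 1)) = 0 := Fin.mk_zero
    simp only [h0]
    exact aux_main hwo hunc hJ hp hu hn m D hD
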